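/- Let λ > 0, D ≤ 0, T > 0. Then ∫₀^T (−λ·e^{−λt} + D·e^{λt})·(−λ·e^{−λ(T−t)} + D·e^{λ(T−t)}) dt > 0. -/
import Mathlib


theorem stmt5 (lam D T : ℝ) (hlam : 0 < lam) (hD : D ≤ 0) (hT : 0 < T) :
    0 < ∫ t in (0 : ℝ)..T,
        (-lam * Real.exp (-lam * t) + D * Real.exp (lam * t)) *
          (-lam * Real.exp (-lam * (T - t)) + D * Real.exp (lam * (T - t))) := by
  apply intervalIntegral.intervalIntegral_pos_of_pos_on
  · apply Continuous.intervalIntegrable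
    continuity
  · intro x _
    have h1 : ∀ s : ℝ, -lam * Real.exp (-lam * s) + D * Real.exp (lam * s) < 0 := by
      intro s
      have := Real.exp_pos (-lam * s)
      have := Real.exp_pos (lam * s)
      nlinarith
    exact mul_pos_of_neg_of_neg (h1 x) (h1 (T - x))
  · exact hT
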